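/- arXiv:1511.06034 — 2 statements merged into one kernel-verified Lean document; each statement's English description precedes it below -/
import Mathlib

section
/- Let r ≥ 2 and m ≥ 1 be integers and let C be the binary code of length (r+1)^m defined by the parity-check matrix H. For every subset E ⊆ Z_{r+1}^m with 1 ≤ |E| ≤ 2^m - 1, there exist an element α ∈ E and a set R ⊆ Z_{r+1}^m \ E with |R| ≤ r such that x_α = ∑_{β ∈ R} x_β for every codeword x ∈ C. -/
/-- `Z_r^m ⊆ Z_{r+1}^m`: the tuples all of whose entries are `< r`;
`Lset r m α` is the set `L(α) = {μ ∈ Z_r^m : μ_j = α_j for all j ∈ T(α)}`,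
where `T(α) = {j : α_j ≤ r-1}`. -/
def Lset (r m : ℕ) (α : Fin m → Fin (r + 1)) : Finset (Fin m → Fin (r + 1)) :=
  Finset.univ.filter fun μ =>
    (∀ j, (μ j : ℕ) < r) ∧ ∀ j, (α j : ℕ) < r → μ j = α j

/-- The binary code `C` with parity-check matrix `H`: all vectors
`x ∈ F_2^{Z_{r+1}^m}` with `x_α = ∑_{β ∈ L(α)} x_β` for every
`α ∈ Z_{r+1}^m \ Z_r^m`. -/
def codeC (r m : ℕ) : Set ((Fin m → Fin (r + 1)) → ZMod 2) :=
  {x | ∀ α : Fin m → Fin (r + 1), ¬(∀ j, (α j : ℕ) < r) →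
    x α = ∑ β ∈ Lset r m α, x β}

lemma lset_self (r m : ℕ) (β : Fin m → Fin (r+1)) (hβ : ∀ j, (β j : ℕ) < r) :
    Lset r m β = {β} := by
  ext μ
  simp only [Lset, Finset.mem_filter, Finset.mem_univ, true_and, Finset.mem_singleton]
  constructor
  · rintro ⟨h1, h2⟩; funext j; exact h2 j (hβ j)
  · rintro rfl; exact ⟨hβ, fun j _ => rfl⟩

lemma code_eq {r m : ℕ} {x} (hx : x ∈ codeC r m) (β : Fin m → Fin (r+1)) :
    x β = ∑ γ ∈ Lset r m β, x γ := by
  by_cases h : ∀ j, (β j : ℕ) < r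
  · rw [lset_self r m β h, Finset.sum_singleton]
  · exact hx β h

lemma mem_lset_update {r m : ℕ} (α : Fin m → Fin (r+1)) (j : Fin m) (t : Fin r)
    (μ : Fin m → Fin (r+1)) :
    μ ∈ Lset r m (Function.update α j t.castSucc) ↔
      μ ∈ Lset r m (Function.update α j (Fin.last r)) ∧ μ j = t.castSucc := by
  simp only [Lset, Finset.mem_filter, Finset.mem_univ, true_and]
  constructor
  · rintro ⟨h1, h2⟩
    refine ⟨⟨h1, fun k hk => ?_⟩, ?_⟩
    · have hkj : k ≠ j := by
        intro h; subst h
        simp [Fin.last] at hk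
      simp only [Function.update_of_ne hkj] at hk ⊢
      have := h2 k (by simpa only [Function.update_of_ne hkj] using hk)
      simpa only [Function.update_of_ne hkj] using this
    · have := h2 j (by simpa using t.isLt)
      simpa using this
  · rintro ⟨⟨h1, h2⟩, h3⟩
    refine ⟨h1, fun k hk => ?_⟩
    by_cases hkj : k = j
    · subst hkj; simpa using h3
    · simp only [Function.update_of_ne hkj] at hk ⊢
      have := h2 k (by simpa only [Function.update_of_ne hkj] using hk)
      simpa only [Function.update_of_ne hkj] using this

lemma lset_last_eq_biUnion {r m : ℕ} (α : Fin m → Fin (r+1)) (j : Fin m) :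
    Lset r m (Function.update α j (Fin.last r)) =
      Finset.univ.biUnion (fun t : Fin r => Lset r m (Function.update α j t.castSucc)) := by
  ext μ
  simp only [Finset.mem_biUnion, Finset.mem_univ, true_and, mem_lset_update]
  constructor
  · intro h
    have hμ : (μ j : ℕ) < r := by
      have := (Finset.mem_filter.mp h).2.1 j
      exact this
    exact ⟨⟨μ j, hμ⟩, h, by ext; simp⟩
  · rintro ⟨t, h, _⟩; exact h

lemma line_sum {r m : ℕ} {x} (hx : x ∈ codeC r m) (α : Fin m → Fin (r+1)) (j : Fin m) :
    ∑ t : Fin (r+1), x (Function.update α j t) = 0 := by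
  rw [Fin.sum_univ_castSucc]
  have hlast : x (Function.update α j (Fin.last r)) =
      ∑ t : Fin r, x (Function.update α j t.castSucc) := by
    rw [code_eq hx, lset_last_eq_biUnion α j, Finset.sum_biUnion]
    · exact Finset.sum_congr rfl fun t _ => (code_eq hx _).symm
    · intro t₁ _ t₂ _ hne
      refine Finset.disjoint_left.mpr fun μ h1 h2 => hne ?_
      have e1 := (mem_lset_update α j t₁ μ).mp h1
      have e2 := (mem_lset_update α j t₂ μ).mp h2
      exact Fin.castSucc_injective r (e1.2 ▸ e2.2)
  rw [hlast]
  exact CharTwo.add_self_eq_zero _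

lemma comb (r : ℕ) : ∀ (m : ℕ) (E : Finset (Fin m → Fin (r+1))),
    E.Nonempty →
    (∀ α ∈ E, ∀ j, ∃ t, t ≠ α j ∧ Function.update α j t ∈ E) →
    2 ^ m ≤ E.card := by
  intro m
  induction m with
  | zero =>
    intro E hne _
    simpa using hne.card_pos
  | succ m ih =>
    intro E hne hE
    set π : (Fin (m+1) → Fin (r+1)) → (Fin m → Fin (r+1)) :=
      fun f => f ∘ Fin.castSucc with hπ
    have hproj : ∀ (f : Fin (m+1) → Fin (r+1)) (t : Fin (r+1)),
        π (Function.update f (Fin.last m) t) = π f := by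
      intro f t
      funext k
      simp only [hπ, Function.comp_apply]
      exact Function.update_of_ne (Fin.castSucc_lt_last k).ne t f
    have hfiber : ∀ b ∈ E.image π, 2 ≤ (E.filter (fun f => π f = b)).card := by
      intro b hb
      obtain ⟨α, hα, rfl⟩ := Finset.mem_image.mp hb
      obtain ⟨t, ht, htE⟩ := hE α hα (Fin.last m)
      refine Finset.one_lt_card.mpr ⟨α, Finset.mem_filter.mpr ⟨hα, rfl⟩,
        Function.update α (Fin.last m) t, Finset.mem_filter.mpr ⟨htE, hproj α t⟩, ?_⟩
      intro h
      have := congrFun h (Fin.last m)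
      rw [Function.update_self] at this
      exact ht this.symm
    have key : (E.image π).card * 2 ≤ E.card := by
      rw [Finset.card_eq_sum_card_image π E]
      simpa using Finset.card_nsmul_le_sum (E.image π) _ 2 hfiber
    have hE' : ∀ α' ∈ E.image π, ∀ j, ∃ t, t ≠ α' j ∧ Function.update α' j t ∈ E.image π := by
      intro α' hα' j
      obtain ⟨α, hα, rfl⟩ := Finset.mem_image.mp hα'
      obtain ⟨t, ht, htE⟩ := hE α hα j.castSucc
      refine ⟨t, ht, ?_⟩
      refine Finset.mem_image.mpr ⟨Function.update α j.castSucc t, htE, ?_⟩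
      funext k
      simp only [hπ, Function.comp_apply]
      by_cases hkj : k = j
      · subst hkj
        rw [Function.update_self, Function.update_self]
      · rw [Function.update_of_ne hkj, Function.update_of_ne
          (fun h => hkj (Fin.castSucc_injective m h))]
        rfl
    have hne' : (E.image π).Nonempty := hne.image π
    calc 2 ^ (m+1) = 2 ^ m * 2 := by ring
    _ ≤ (E.image π).card * 2 := by
      exact Nat.mul_le_mul_right 2 (ih (E.image π) hne' hE')
    _ ≤ E.card := key

/-- For every erasure pattern `E` with `1 ≤ |E| ≤ 2^m - 1` there is a symbol
`α ∈ E` with a repair set `R` of size at most `r` disjoint from `E`. -/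
theorem exists_repairable_symbol (r m : ℕ) (hr : 2 ≤ r) (hm : 1 ≤ m)
    (E : Finset (Fin m → Fin (r + 1))) (h1 : 1 ≤ E.card) (h2 : E.card ≤ 2 ^ m - 1) :
    ∃ α ∈ E, ∃ R : Finset (Fin m → Fin (r + 1)),
      (∀ β ∈ R, β ∉ E) ∧ α ∉ R ∧ R.card ≤ r ∧
      ∀ x ∈ codeC r m, x α = ∑ β ∈ R, x β := by
  have hmain : ∃ α ∈ E, ∃ j : Fin m, ∀ t : Fin (r+1), t ≠ α j → Function.update α j t ∉ E := by
    by_contra hc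
    push_neg at hc
    have hne : E.Nonempty := Finset.card_pos.mp h1
    have hge := comb r m E hne hc
    have hp : 1 ≤ 2 ^ m := Nat.one_le_two_pow
    omega
  obtain ⟨α, hα, j, hj⟩ := hmain
  refine ⟨α, hα, (Finset.univ.erase (α j)).image (fun t => Function.update α j t),
    ?_, ?_, ?_, ?_⟩
  · intro β hβ
    obtain ⟨t, ht, rfl⟩ := Finset.mem_image.mp hβ
    exact hj t (Finset.ne_of_mem_erase ht)
  · intro hmem
    obtain ⟨t, ht, heq⟩ := Finset.mem_image.mp hmem
    have := congrFun heq j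
    rw [Function.update_self] at this
    exact Finset.ne_of_mem_erase ht this
  · calc ((Finset.univ.erase (α j)).image (fun t => Function.update α j t)).card
        ≤ (Finset.univ.erase (α j)).card := Finset.card_image_le
    _ = r := by rw [Finset.card_erase_of_mem (Finset.mem_univ _)]; simp
  · intro x hx
    have h0 := line_sum hx α j
    rw [← Finset.add_sum_erase _ _ (Finset.mem_univ (α j)), Function.update_eq_self] at h0
    have hxα := eq_neg_of_add_eq_zero_left h0
    rw [CharTwo.neg_eq] at hxα
    rw [hxα, Finset.sum_image]
    intro t1 _ t2 _ heq
    have := congrFun heq j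
    simpa only [Function.update_self] using this
end

section
/- Let r ≥ 2 and m ≥ 1 be integers and let C be the binary code of length (r+1)^m defined by the parity-check matrix H. Then C has locality r and availability m: for every α ∈ Z_{r+1}^m, the m sets R_i = L^{(i)}_α \ {α} (i = 1,…,m) are pairwise disjoint, each has exactly r elements, and each is a repair set of α, i.e., x_α = ∑_{β ∈ R_i} x_β for every codeword x ∈ C and every i ∈ {1,…,m}. -/
/-- `lineSet r m i α` is the axis-parallel line `L^{(i)}_α` through `α` in
direction `i`. -/
def lineSet (r m : ℕ) (i : Fin m) (α : Fin m → Fin (r + 1)) :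
    Finset (Fin m → Fin (r + 1)) :=
  Finset.univ.filter fun μ => ∀ j, j ≠ i → μ j = α j

lemma mem_Lset {r m : ℕ} {α μ : Fin m → Fin (r + 1)} :
    μ ∈ Lset r m α ↔ (∀ j, (μ j : ℕ) < r) ∧ ∀ j, (α j : ℕ) < r → μ j = α j := by
  simp [Lset]

lemma mem_lineSet {r m : ℕ} {i : Fin m} {α μ : Fin m → Fin (r + 1)} :
    μ ∈ lineSet r m i α ↔ ∀ j, j ≠ i → μ j = α j := by
  simp [lineSet]

lemma Lset_self {r m : ℕ} {α : Fin m → Fin (r + 1)} (h : ∀ j, (α j : ℕ) < r) :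
    Lset r m α = {α} := by
  ext μ
  simp only [mem_Lset, Finset.mem_singleton]
  constructor
  · rintro ⟨h1, h2⟩
    exact funext fun j => h2 j (h j)
  · rintro rfl
    exact ⟨h, fun j _ => rfl⟩

lemma check_all {r m : ℕ} {x : (Fin m → Fin (r + 1)) → ZMod 2}
    (hx : x ∈ codeC r m) (α : Fin m → Fin (r + 1)) :
    x α = ∑ β ∈ Lset r m α, x β := by
  by_cases h : ∀ j, (α j : ℕ) < r
  · rw [Lset_self h, Finset.sum_singleton]
  · exact hx α h

lemma lineSet_eq_image {r m : ℕ} (i : Fin m) (α : Fin m → Fin (r + 1)) :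
    lineSet r m i α = Finset.univ.image (fun c => Function.update α i c) := by
  ext μ
  simp only [mem_lineSet, Finset.mem_image, Finset.mem_univ, true_and]
  constructor
  · intro h
    refine ⟨μ i, funext fun j => ?_⟩
    by_cases hj : j = i
    · subst hj; simp
    · rw [Function.update_of_ne hj, h j hj]
  · rintro ⟨c, rfl⟩ j hj
    rw [Function.update_of_ne hj]

lemma update_inj {r m : ℕ} (i : Fin m) (α : Fin m → Fin (r + 1)) :
    Function.Injective (fun c : Fin (r + 1) => Function.update α i c) := by
  intro c c' h
  have := congrFun h i
  simpa using this

lemma line_sum_zero {r m : ℕ} (hr : 2 ≤ r) {x : (Fin m → Fin (r + 1)) → ZMod 2}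
    (hx : x ∈ codeC r m) (i : Fin m) (α : Fin m → Fin (r + 1)) :
    ∑ β ∈ lineSet r m i α, x β = 0 := by
  set u : Fin (r + 1) → (Fin m → Fin (r + 1)) := fun c => Function.update α i c with hu
  have hui : ∀ c, u c i = c := fun c => Function.update_self i c α
  have huj : ∀ c, ∀ j, j ≠ i → u c j = α j := fun c j hj => Function.update_of_ne hj c α
  have hline : ∑ β ∈ lineSet r m i α, x β = ∑ c : Fin (r + 1), x (u c) := by
    rw [lineSet_eq_image, Finset.sum_image (fun a _ b _ h => update_inj i α h)]
  set last : Fin (r + 1) := ⟨r, Nat.lt_succ_self r⟩ with hlast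
  have hlastval : (last : ℕ) = r := rfl
  set s : Finset (Fin (r + 1)) := Finset.univ.filter fun c => (c : ℕ) < r with hs
  -- membership characterization for μ ∈ Lset (u c) with (c:ℕ) < r
  have hmemc : ∀ c : Fin (r + 1), (c : ℕ) < r → ∀ μ, μ ∈ Lset r m (u c) → μ i = c := by
    intro c hc μ hμ
    have := (mem_Lset.mp hμ).2 i
    rw [hui] at this
    exact this hc
  have hbi : Lset r m (u last) = s.biUnion fun c => Lset r m (u c) := by
    ext μ
    simp only [Finset.mem_biUnion, hs, Finset.mem_filter, Finset.mem_univ, true_and]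
    constructor
    · intro hμ
      obtain ⟨h1, h2⟩ := mem_Lset.mp hμ
      refine ⟨μ i, h1 i, mem_Lset.mpr ⟨h1, fun j hj => ?_⟩⟩
      by_cases hji : j = i
      · subst hji; rw [hui]
      · rw [huj _ _ hji] at hj ⊢
        have : (u last j : ℕ) < r := by rw [huj _ _ hji]; exact hj
        have := h2 j this
        rw [huj _ _ hji] at this
        exact this
    · rintro ⟨c, hc, hμ⟩
      obtain ⟨h1, h2⟩ := mem_Lset.mp hμ
      refine mem_Lset.mpr ⟨h1, fun j hj => ?_⟩
      by_cases hji : j = i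
      · subst hji
        rw [hui, hlastval] at hj
        exact absurd hj (lt_irrefl r)
      · rw [huj _ _ hji] at hj ⊢
        have : (u c j : ℕ) < r := by rw [huj _ _ hji]; exact hj
        have := h2 j this
        rw [huj _ _ hji] at this
        exact this
  have hdisj : ∀ c ∈ s, ∀ c' ∈ s, c ≠ c' →
      Disjoint (Lset r m (u c)) (Lset r m (u c')) := by
    intro c hc c' hc' hne
    rw [Finset.disjoint_left]
    intro μ h1 h2
    rw [hs, Finset.mem_filter] at hc hc'
    exact hne ((hmemc c hc.2 μ h1).symm.trans (hmemc c' hc'.2 μ h2))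
  have hsum_s : ∑ c ∈ s, ∑ β ∈ Lset r m (u c), x β = ∑ β ∈ Lset r m (u last), x β := by
    rw [hbi, Finset.sum_biUnion hdisj]
  have hsc : Finset.univ.filter (fun c : Fin (r + 1) => ¬ (c : ℕ) < r) = {last} := by
    ext c
    simp only [Finset.mem_filter, Finset.mem_univ, true_and, Finset.mem_singleton, not_lt]
    constructor
    · intro h
      have := c.isLt
      exact Fin.ext (by omega)
    · rintro rfl; exact le_refl r
  have hT : ∀ c, x (u c) = ∑ β ∈ Lset r m (u c), x β := fun c => check_all hx (u c)
  calc ∑ β ∈ lineSet r m i α, x β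
      = ∑ c : Fin (r + 1), ∑ β ∈ Lset r m (u c), x β := by
        rw [hline]; exact Finset.sum_congr rfl fun c _ => hT c
    _ = ∑ c ∈ s, ∑ β ∈ Lset r m (u c), x β
        + ∑ c ∈ Finset.univ.filter (fun c : Fin (r + 1) => ¬ (c : ℕ) < r),
            ∑ β ∈ Lset r m (u c), x β := (Finset.sum_filter_add_sum_filter_not _ _ _).symm
    _ = ∑ β ∈ Lset r m (u last), x β + ∑ β ∈ Lset r m (u last), x β := by
        rw [hsum_s, hsc, Finset.sum_singleton]
    _ = 0 := CharTwo.add_self_eq_zero _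

/-- `C` has locality `r` and availability `m`: for every coordinate `α`, the
`m` punctured lines `R_i = L^{(i)}_α \ {α}` are pairwise disjoint, each has
exactly `r` elements, and each is a repair set of `α`. -/
theorem codeC_locality_availability (r m : ℕ) (hr : 2 ≤ r) (hm : 1 ≤ m)
    (α : Fin m → Fin (r + 1)) :
    (∀ i j : Fin m, i ≠ j →
      Disjoint ((lineSet r m i α).erase α) ((lineSet r m j α).erase α)) ∧
    (∀ i : Fin m, ((lineSet r m i α).erase α).card = r) ∧
    (∀ i : Fin m, ∀ x ∈ codeC r m,
      x α = ∑ β ∈ (lineSet r m i α).erase α, x β) := by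

  have hαmem : ∀ i, α ∈ lineSet r m i α := fun i => mem_lineSet.mpr fun j _ => rfl
  refine ⟨?_, ?_, ?_⟩
  · intro i j hij
    rw [Finset.disjoint_left]
    intro μ h1 h2
    obtain ⟨hne, hl1⟩ := Finset.mem_erase.mp h1
    obtain ⟨_, hl2⟩ := Finset.mem_erase.mp h2
    apply hne
    funext k
    by_cases hk : k = i
    · exact mem_lineSet.mp hl2 k (fun h => hij (hk.symm.trans h))
    · exact mem_lineSet.mp hl1 k hk
  · intro i
    rw [Finset.card_erase_of_mem (hαmem i), lineSet_eq_image,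
      Finset.card_image_of_injective _ (update_inj i α), Finset.card_univ,
      Fintype.card_fin]
    omega
  · intro i x hx
    have h0 := line_sum_zero hr hx i α
    rw [← Finset.add_sum_erase _ _ (hαmem i)] at h0
    have : x α + (x α + ∑ β ∈ (lineSet r m i α).erase α, x β)
        = x α + 0 := by rw [h0]
    rw [← add_assoc, CharTwo.add_self_eq_zero, zero_add, add_zero] at this
    exact this.symm
end
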